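/- arXiv:2005.03564 — 2 statements merged into one kernel-verified Lean document; each statement's English description precedes it below -/
import Mathlib

section
/- Let α_A and α_H be real numbers with 0 < α_A < α_H. Let (A_l)_{l≥1} and (H_l)_{l≥1} be mutually independent [0,1]-valued random variables, where each A_l has law with density α_A x^{α_A − 1} on [0,1] with respect to Lebesgue measure and each H_l has law with density α_H x^{α_H − 1} on [0,1] with respect to Lebesgue measure. Define λ = α_H/(α_H + 1) − α_A/(α_A + 1), K = 1 + λ, σ² = (α_A/(α_A + 2) − (α_A/(α_A + 1))²) + (α_H/(α_H + 2) − (α_H/(α_H + 1))²), and c = λ² / (2(σ² + Kλ/3)). Then for every positive integer k, the probability that there exists some M ≥ k with Σ_{l=1}^M A_l ≥ Σ_{l=1}^M H_l is at most e^{-c·k} / (1 − e^{-c}). -/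
set_option maxHeartbeats 4000000

private lemma QS.two_mul_three_pow_le_factorial (n : ℕ) : 2 * 3 ^ n ≤ (n + 2).factorial := by
  induction n with
  | zero => simp [Nat.factorial]
  | succ n ih =>
      have h : (n + 3).factorial = (n + 3) * (n + 2).factorial := rfl
      calc 2 * 3 ^ (n + 1) = 3 * (2 * 3 ^ n) := by ring
        _ ≤ 3 * (n + 2).factorial := by omega
        _ ≤ (n + 3) * (n + 2).factorial := Nat.mul_le_mul_right _ (by omega)
        _ = (n + 3).factorial := h.symm

set_option maxHeartbeats 2000000 in
private lemma QS.exp_le_quad {u b : ℝ} (hb : b < 3) (hub : |u| ≤ b) :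
    Real.exp u ≤ 1 + u + u ^ 2 / 2 * (1 - b / 3)⁻¹ := by
  have hb0 : 0 ≤ b := (abs_nonneg u).trans hub
  have hsum : Summable (fun n : ℕ => u ^ n / n.factorial) := Real.summable_pow_div_factorial u
  have hsum1 : Summable (fun n : ℕ => u ^ (n + 1) / (n + 1).factorial) :=
    (summable_nat_add_iff 1).2 hsum
  have hsum2 : Summable (fun n : ℕ => u ^ (n + 2) / (n + 2).factorial) :=
    (summable_nat_add_iff 2).2 hsum
  have hexp : Real.exp u = ∑' n : ℕ, u ^ n / n.factorial := by
    rw [Real.exp_eq_exp_ℝ, NormedSpace.exp_eq_tsum_div]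
  have hsplit : Real.exp u = 1 + u + ∑' n : ℕ, u ^ (n + 2) / (n + 2).factorial := by
    rw [hexp, Summable.tsum_eq_zero_add hsum, Summable.tsum_eq_zero_add hsum1]
    simp [Nat.factorial]
    ring
  rw [hsplit]
  have hgeo : Summable (fun n : ℕ => u ^ 2 / 2 * (b / 3) ^ n) :=
    (summable_geometric_of_lt_one (by positivity) (by linarith)).mul_left _
  have hptw : ∀ n : ℕ, u ^ (n + 2) / (n + 2).factorial ≤ u ^ 2 / 2 * (b / 3) ^ n := by
    intro n
    have hfact : (2 * 3 ^ n : ℝ) ≤ ((n + 2).factorial : ℝ) := by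
      exact_mod_cast QS.two_mul_three_pow_le_factorial n
    have h1 : u ^ (n + 2) ≤ u ^ 2 * b ^ n := by
      calc u ^ (n + 2) ≤ |u ^ (n + 2)| := le_abs_self _
        _ = |u| ^ 2 * |u| ^ n := by rw [abs_pow]; ring
        _ ≤ |u| ^ 2 * b ^ n :=
            mul_le_mul_of_nonneg_left (pow_le_pow_left₀ (abs_nonneg u) hub n) (by positivity)
        _ = u ^ 2 * b ^ n := by rw [sq_abs]
    calc u ^ (n + 2) / (n + 2).factorial ≤ (u ^ 2 * b ^ n) / (2 * 3 ^ n) :=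
          div_le_div₀ (by positivity) h1 (by positivity) hfact
      _ = u ^ 2 / 2 * (b / 3) ^ n := by rw [div_pow]; ring
  have htail : (∑' n : ℕ, u ^ (n + 2) / (n + 2).factorial)
      ≤ u ^ 2 / 2 * (1 - b / 3)⁻¹ := by
    calc (∑' n : ℕ, u ^ (n + 2) / (n + 2).factorial)
        ≤ ∑' n : ℕ, u ^ 2 / 2 * (b / 3) ^ n := Summable.tsum_le_tsum hptw hsum2 hgeo
      _ = u ^ 2 / 2 * (1 - b / 3)⁻¹ := by
          rw [tsum_mul_left, tsum_geometric_of_lt_one (by positivity) (by linarith)]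
  linarith



open MeasureTheory ProbabilityTheory

/-- The block-power distribution with stake power `α`: the measure on `[0,1]` with
density `x ↦ α * x ^ (α - 1)` with respect to Lebesgue measure. -/
noncomputable def blockPowerMeasure (α : ℝ) : Measure ℝ :=
  (volume.restrict (Set.Icc (0 : ℝ) 1)).withDensity
    fun x => ENNReal.ofReal (α * x ^ (α - 1))

private lemma QS.blockPower_moment (α : ℝ) (hα : 0 < α) (n : ℕ) :
    ∫ x, x ^ n ∂(blockPowerMeasure α) = α / (α + n) := by
  have hαn : (0:ℝ) < α + n := by positivity
  have hd : Measurable fun x : ℝ => (α * x ^ (α - 1)).toNNReal := by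
    apply Measurable.real_toNNReal
    exact (measurable_id.pow_const _).const_mul α
  rw [blockPowerMeasure]
  rw [show (fun x : ℝ => ENNReal.ofReal (α * x ^ (α - 1)))
      = (fun x : ℝ => ((α * x ^ (α - 1)).toNNReal : ENNReal)) from rfl]
  rw [integral_withDensity_eq_integral_smul hd]
  rw [MeasureTheory.integral_Icc_eq_integral_Ioc]
  have hcong : ∀ x ∈ Set.Ioc (0:ℝ) 1,
      (α * x ^ (α - 1)).toNNReal • x ^ n = α * x ^ (α - 1 + (n:ℝ)) := by
    intro x hx
    have hx0 : 0 < x := hx.1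
    rw [NNReal.smul_def, smul_eq_mul, Real.coe_toNNReal _ (by positivity)]
    rw [Real.rpow_add hx0, Real.rpow_natCast]
    ring
  rw [setIntegral_congr_fun measurableSet_Ioc hcong]
  rw [← intervalIntegral.integral_of_le zero_le_one]
  rw [intervalIntegral.integral_const_mul]
  rw [integral_rpow (Or.inl (by linarith))]
  rw [show α - 1 + (n:ℝ) + 1 = α + n by ring]
  rw [Real.one_rpow, Real.zero_rpow (ne_of_gt hαn)]
  field_simp
  norm_num

/-- **Common-prefix / k-finality bound.** Let `0 < α_A < α_H` and let `(A l)` and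
`(H l)` be mutually independent `[0,1]`-valued random variables, `A l` with block-power
law of stake power `α_A` and `H l` with block-power law of stake power `α_H`. With
`lam = α_H/(α_H+1) - α_A/(α_A+1)`, `K = 1 + lam`,
`σ2 = (α_A/(α_A+2) - (α_A/(α_A+1))²) + (α_H/(α_H+2) - (α_H/(α_H+1))²)` and
`c = lam² / (2 * (σ2 + K * lam / 3))`, the probability that for some `M ≥ k` the
adversarial chain power `∑_{l<M} A l` matches or exceeds the honest chain power
`∑_{l<M} H l` is at most `exp (-c * k) / (1 - exp (-c))`. -/
theorem quicksync_finality_violation_bound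
    {Ω : Type*} [MeasurableSpace Ω] (μ : Measure Ω) [IsProbabilityMeasure μ]
    (αA αH : ℝ) (hαA : 0 < αA) (hαAH : αA < αH)
    (A H : ℕ → Ω → ℝ)
    (hmeasA : ∀ l, Measurable (A l)) (hmeasH : ∀ l, Measurable (H l))
    (hrangeA : ∀ l ω, A l ω ∈ Set.Icc (0 : ℝ) 1)
    (hrangeH : ∀ l ω, H l ω ∈ Set.Icc (0 : ℝ) 1)
    (hindep : iIndepFun (Sum.elim A H) μ)
    (hlawA : ∀ l, Measure.map (A l) μ = blockPowerMeasure αA)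
    (hlawH : ∀ l, Measure.map (H l) μ = blockPowerMeasure αH)
    (lam K σ2 c : ℝ)
    (hlam : lam = αH / (αH + 1) - αA / (αA + 1))
    (hK : K = 1 + lam)
    (hσ2 : σ2 = (αA / (αA + 2) - (αA / (αA + 1)) ^ 2)
        + (αH / (αH + 2) - (αH / (αH + 1)) ^ 2))
    (hc : c = lam ^ 2 / (2 * (σ2 + K * lam / 3)))
    (k : ℕ) (hk : 0 < k) :
    μ {ω | ∃ M : ℕ, k ≤ M ∧
        ∑ l ∈ Finset.range M, H l ω ≤ ∑ l ∈ Finset.range M, A l ω}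
      ≤ ENNReal.ofReal (Real.exp (-(c * k)) / (1 - Real.exp (-c))) := by
  classical
  have hαH : 0 < αH := hαA.trans hαAH
  -- positivity facts
  have hlam_pos : 0 < lam := by
    rw [hlam, sub_pos, div_lt_div_iff₀ (by linarith) (by linarith)]
    nlinarith
  have hlam_le1 : lam ≤ 1 := by
    have h1 : αH / (αH + 1) < 1 := by rw [div_lt_one (by linarith)]; linarith
    have h2 : 0 ≤ αA / (αA + 1) := by positivity
    rw [hlam]; linarith
  have hσ2_pos : 0 < σ2 := by
    have t1 : (αA / (αA + 1)) ^ 2 < αA / (αA + 2) := by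
      rw [div_pow, div_lt_div_iff₀ (by positivity) (by linarith)]
      nlinarith
    have t2 : (αH / (αH + 1)) ^ 2 < αH / (αH + 2) := by
      rw [div_pow, div_lt_div_iff₀ (by positivity) (by linarith)]
      nlinarith
    rw [hσ2]; linarith
  have hK_pos : 0 < K := by rw [hK]; linarith
  have hQ : 0 < σ2 + K * lam / 3 := by positivity
  set s : ℝ := lam / (σ2 + K * lam / 3) with hs
  have hs_pos : 0 < s := by positivity
  have hsK3 : s * K < 3 := by
    rw [hs, div_mul_eq_mul_div, div_lt_iff₀ hQ]
    nlinarith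
  have h1sK : 1 - s * K / 3 = σ2 / (σ2 + K * lam / 3) := by
    rw [hs]; field_simp; ring
  have hc_pos : 0 < c := by rw [hc]; positivity
  have hslam : s * lam = 2 * c := by rw [hs, hc]; field_simp
  have hDσ : s ^ 2 / 2 * (1 - s * K / 3)⁻¹ * σ2 = c := by
    rw [h1sK, hs, hc, div_pow]
    field_simp
  -- integrability of bounded measurable functions
  have hint : ∀ (f : Ω → ℝ) (C : ℝ), Measurable f → (∀ ω, |f ω| ≤ C) → Integrable f μ := by
    intro f C hf hC
    exact (integrable_const C).mono' hf.aestronglyMeasurable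
      (ae_of_all _ (by simpa [Real.norm_eq_abs] using hC))
  -- moments
  have hmom : ∀ (f : Ω → ℝ) (α : ℝ), 0 < α → Measurable f →
      Measure.map f μ = blockPowerMeasure α → ∀ n : ℕ,
      ∫ ω, (f ω) ^ n ∂μ = α / (α + n) := by
    intro f α hα hf hlaw n
    have h := MeasureTheory.integral_map (φ := f) (f := fun x : ℝ => x ^ n)
      (hf.aemeasurable (μ := μ)) (measurable_id.pow_const n).aestronglyMeasurable
    rw [← h, hlaw, QS.blockPower_moment α hα n]
  have hEA : ∀ l, ∫ ω, A l ω ∂μ = αA / (αA + 1) := by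
    intro l; simpa using hmom (A l) αA hαA (hmeasA l) (hlawA l) 1
  have hEH : ∀ l, ∫ ω, H l ω ∂μ = αH / (αH + 1) := by
    intro l; simpa using hmom (H l) αH hαH (hmeasH l) (hlawH l) 1
  have hEA2 : ∀ l, ∫ ω, (A l ω) ^ 2 ∂μ = αA / (αA + 2) := by
    intro l; simpa using hmom (A l) αA hαA (hmeasA l) (hlawA l) 2
  have hEH2 : ∀ l, ∫ ω, (H l ω) ^ 2 ∂μ = αH / (αH + 2) := by
    intro l; simpa using hmom (H l) αH hαH (hmeasH l) (hlawH l) 2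
  have hfmeas : ∀ i : ℕ ⊕ ℕ, Measurable (Sum.elim A H i) := by
    rintro (l | l); exacts [hmeasA l, hmeasH l]
  -- bounds
  have hAb : ∀ l ω, |A l ω| ≤ 1 := fun l ω =>
    abs_le.2 ⟨by linarith [(hrangeA l ω).1], (hrangeA l ω).2⟩
  have hHb : ∀ l ω, |H l ω| ≤ 1 := fun l ω =>
    abs_le.2 ⟨by linarith [(hrangeH l ω).1], (hrangeH l ω).2⟩
  have hiA : ∀ l, Integrable (A l) μ := fun l => hint _ 1 (hmeasA l) (hAb l)
  have hiH : ∀ l, Integrable (H l) μ := fun l => hint _ 1 (hmeasH l) (hHb l)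
  have hiA2 : ∀ l, Integrable (fun ω => (A l ω) ^ 2) μ := fun l =>
    hint _ 1 ((hmeasA l).pow_const 2) fun ω => by
      rw [abs_pow]
      calc |A l ω| ^ 2 ≤ 1 ^ 2 := pow_le_pow_left₀ (abs_nonneg _) (hAb l ω) 2
        _ = 1 := one_pow 2
  have hiH2 : ∀ l, Integrable (fun ω => (H l ω) ^ 2) μ := fun l =>
    hint _ 1 ((hmeasH l).pow_const 2) fun ω => by
      rw [abs_pow]
      calc |H l ω| ^ 2 ≤ 1 ^ 2 := pow_le_pow_left₀ (abs_nonneg _) (hHb l ω) 2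
        _ = 1 := one_pow 2
  have hiAH : ∀ l, Integrable (fun ω => A l ω * H l ω) μ := fun l =>
    hint _ 1 ((hmeasA l).mul (hmeasH l)) fun ω => by
      rw [abs_mul]
      exact mul_le_one₀ (hAb l ω) (abs_nonneg _) (hHb l ω)
  -- independence of A l and H l, product moment
  have hindepAH : ∀ l, IndepFun (A l) (H l) μ := fun l =>
    hindep.indepFun (show (Sum.inl l : ℕ ⊕ ℕ) ≠ Sum.inr l by simp)
  have hEAH : ∀ l, ∫ ω, A l ω * H l ω ∂μ = (αA / (αA + 1)) * (αH / (αH + 1)) := by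
    intro l
    have h := (hindepAH l).integral_mul_eq_mul_integral (hiA l).aestronglyMeasurable (hiH l).aestronglyMeasurable
    rw [show (∫ ω, A l ω * H l ω ∂μ) = integral μ (A l * H l) from rfl, h, hEA, hEH]
  -- the centered increments
  have hXmeas : ∀ l, Measurable fun ω => A l ω - H l ω + lam := fun l =>
    ((hmeasA l).sub (hmeasH l)).add_const lam
  have hXabs : ∀ l ω, |A l ω - H l ω + lam| ≤ K := by
    intro l ω
    have h1 := hrangeA l ω; have h2 := hrangeH l ω
    rw [hK]
    exact abs_le.2 ⟨by simp only [Set.mem_Icc] at h1 h2; cases h1; cases h2; linarith,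
      by simp only [Set.mem_Icc] at h1 h2; cases h1; cases h2; linarith⟩
  have hiX : ∀ l, Integrable (fun ω => A l ω - H l ω + lam) μ := fun l =>
    hint _ K (hXmeas l) (hXabs l)
  have hiX2 : ∀ l, Integrable (fun ω => (A l ω - H l ω + lam) ^ 2) μ := fun l =>
    hint _ (K ^ 2) ((hXmeas l).pow_const 2) fun ω => by
      rw [abs_pow]
      exact pow_le_pow_left₀ (abs_nonneg _) (hXabs l ω) 2
  have hEX : ∀ l, ∫ ω, (A l ω - H l ω + lam) ∂μ = 0 := by
    intro l
    have e1 : ∫ ω, (A l ω - H l ω + lam) ∂μ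
        = (∫ ω, (A l ω - H l ω) ∂μ) + ∫ _ω, lam ∂μ :=
      integral_add ((hiA l).sub (hiH l)) (integrable_const lam)
    have e2 : ∫ ω, (A l ω - H l ω) ∂μ = (∫ ω, A l ω ∂μ) - ∫ ω, H l ω ∂μ :=
      integral_sub (hiA l) (hiH l)
    rw [e1, e2, integral_const, hEA, hEH]
    simp [hlam]
  have hEX2 : ∀ l, ∫ ω, (A l ω - H l ω + lam) ^ 2 ∂μ = σ2 := by
    intro l
    have hsplit : (fun ω => (A l ω - H l ω + lam) ^ 2)
        = fun ω => ((A l ω) ^ 2 + (H l ω) ^ 2 - 2 * (A l ω * H l ω))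
            + (2 * lam * A l ω - 2 * lam * H l ω + lam ^ 2) := by
      funext ω; ring
    rw [show (∫ ω, (A l ω - H l ω + lam) ^ 2 ∂μ)
        = ∫ ω, (((A l ω) ^ 2 + (H l ω) ^ 2 - 2 * (A l ω * H l ω))
            + (2 * lam * A l ω - 2 * lam * H l ω + lam ^ 2)) ∂μ from by rw [← hsplit]]
    have e1 : ∫ ω, ((A l ω) ^ 2 + (H l ω) ^ 2 - 2 * (A l ω * H l ω)
          + (2 * lam * A l ω - 2 * lam * H l ω + lam ^ 2)) ∂μ
        = (∫ ω, ((A l ω) ^ 2 + (H l ω) ^ 2 - 2 * (A l ω * H l ω)) ∂μ)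
          + ∫ ω, (2 * lam * A l ω - 2 * lam * H l ω + lam ^ 2) ∂μ :=
      integral_add (((hiA2 l).add (hiH2 l)).sub ((hiAH l).const_mul 2))
        ((((hiA l).const_mul (2 * lam)).sub ((hiH l).const_mul (2 * lam))).add
          (integrable_const (lam ^ 2)))
    have e2 : ∫ ω, ((A l ω) ^ 2 + (H l ω) ^ 2 - 2 * (A l ω * H l ω)) ∂μ
        = (∫ ω, ((A l ω) ^ 2 + (H l ω) ^ 2) ∂μ) - ∫ ω, 2 * (A l ω * H l ω) ∂μ :=
      integral_sub ((hiA2 l).add (hiH2 l)) ((hiAH l).const_mul 2)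
    have e3 : ∫ ω, ((A l ω) ^ 2 + (H l ω) ^ 2) ∂μ
        = (∫ ω, (A l ω) ^ 2 ∂μ) + ∫ ω, (H l ω) ^ 2 ∂μ := integral_add (hiA2 l) (hiH2 l)
    have e4 : ∫ ω, 2 * (A l ω * H l ω) ∂μ = 2 * ∫ ω, A l ω * H l ω ∂μ :=
      integral_const_mul _ _
    have e5 : ∫ ω, (2 * lam * A l ω - 2 * lam * H l ω + lam ^ 2) ∂μ
        = (∫ ω, (2 * lam * A l ω - 2 * lam * H l ω) ∂μ) + ∫ _ω, lam ^ 2 ∂μ :=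
      integral_add (((hiA l).const_mul (2 * lam)).sub ((hiH l).const_mul (2 * lam)))
        (integrable_const (lam ^ 2))
    have e6 : ∫ ω, (2 * lam * A l ω - 2 * lam * H l ω) ∂μ
        = (∫ ω, 2 * lam * A l ω ∂μ) - ∫ ω, 2 * lam * H l ω ∂μ :=
      integral_sub ((hiA l).const_mul (2 * lam)) ((hiH l).const_mul (2 * lam))
    have e7 : ∫ ω, 2 * lam * A l ω ∂μ = 2 * lam * ∫ ω, A l ω ∂μ := integral_const_mul _ _
    have e8 : ∫ ω, 2 * lam * H l ω ∂μ = 2 * lam * ∫ ω, H l ω ∂μ := integral_const_mul _ _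
    rw [e1, e2, e3, e4, e5, e6, e7, e8, integral_const, hEA, hEH, hEA2, hEH2, hEAH]
    simp only [measure_univ, ENNReal.toReal_one, probReal_univ, smul_eq_mul, one_mul]
    rw [hσ2, hlam]; ring
  -- per-slot mgf bound
  have hmgfX : ∀ l, mgf (fun ω => A l ω - H l ω + lam) μ s ≤ Real.exp c := by
    intro l
    set D : ℝ := s ^ 2 / 2 * (1 - s * K / 3)⁻¹ with hD
    have hie : Integrable (fun ω => Real.exp (s * (A l ω - H l ω + lam))) μ := by
      apply hint _ (Real.exp (s * K)) (((hXmeas l).const_mul s).exp)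
      intro ω
      rw [Real.abs_exp]
      exact Real.exp_le_exp.2 (mul_le_mul_of_nonneg_left
        (le_trans (le_abs_self _) (hXabs l ω)) hs_pos.le)
    have hptw : ∀ ω, Real.exp (s * (A l ω - H l ω + lam))
        ≤ 1 + s * (A l ω - H l ω + lam) + D * (A l ω - H l ω + lam) ^ 2 := by
      intro ω
      have h := QS.exp_le_quad (u := s * (A l ω - H l ω + lam)) (b := s * K) hsK3
        (by rw [abs_mul, abs_of_nonneg hs_pos.le]
            exact mul_le_mul_of_nonneg_left (hXabs l ω) hs_pos.le)
      calc Real.exp (s * (A l ω - H l ω + lam))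
          ≤ 1 + s * (A l ω - H l ω + lam)
            + (s * (A l ω - H l ω + lam)) ^ 2 / 2 * (1 - s * K / 3)⁻¹ := h
        _ = 1 + s * (A l ω - H l ω + lam) + D * (A l ω - H l ω + lam) ^ 2 := by
            rw [hD]; ring
    have hirhs : Integrable (fun ω => 1 + s * (A l ω - H l ω + lam)
        + D * (A l ω - H l ω + lam) ^ 2) μ :=
      ((integrable_const 1).add ((hiX l).const_mul s)).add ((hiX2 l).const_mul D)
    have hmono := integral_mono hie hirhs hptw
    have hrhs : ∫ ω, (1 + s * (A l ω - H l ω + lam)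
        + D * (A l ω - H l ω + lam) ^ 2) ∂μ = 1 + c := by
      have e1 : ∫ ω, (1 + s * (A l ω - H l ω + lam)
            + D * (A l ω - H l ω + lam) ^ 2) ∂μ
          = (∫ ω, (1 + s * (A l ω - H l ω + lam)) ∂μ)
            + ∫ ω, D * (A l ω - H l ω + lam) ^ 2 ∂μ :=
        integral_add ((integrable_const 1).add ((hiX l).const_mul s)) ((hiX2 l).const_mul D)
      have e2 : ∫ ω, (1 + s * (A l ω - H l ω + lam)) ∂μ
          = (∫ _ω, (1:ℝ) ∂μ) + ∫ ω, s * (A l ω - H l ω + lam) ∂μ :=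
        integral_add (integrable_const 1) ((hiX l).const_mul s)
      have e3 : ∫ ω, s * (A l ω - H l ω + lam) ∂μ
          = s * ∫ ω, (A l ω - H l ω + lam) ∂μ := integral_const_mul _ _
      have e4 : ∫ ω, D * (A l ω - H l ω + lam) ^ 2 ∂μ
          = D * ∫ ω, (A l ω - H l ω + lam) ^ 2 ∂μ := integral_const_mul _ _
      rw [e1, e2, e3, e4, hEX l, hEX2 l, integral_const]
      simp only [measure_univ, ENNReal.toReal_one, probReal_univ, smul_eq_mul, one_mul, mul_zero, add_zero]
      rw [hD, hDσ]
    calc mgf (fun ω => A l ω - H l ω + lam) μ s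
        = ∫ ω, Real.exp (s * (A l ω - H l ω + lam)) ∂μ := rfl
      _ ≤ 1 + c := by rw [← hrhs]; exact hmono
      _ ≤ Real.exp c := by linarith [Real.add_one_le_exp c]
  -- independence of partial sum and next increment
  have hindep_sum : ∀ M : ℕ,
      IndepFun (fun ω => ∑ l ∈ Finset.range M, (A l ω - H l ω + lam))
        (fun ω => A M ω - H M ω + lam) μ := by
    intro M
    set S : Finset (ℕ ⊕ ℕ) :=
      ((Finset.range M).image Sum.inl) ∪ ((Finset.range M).image Sum.inr) with hS
    set T : Finset (ℕ ⊕ ℕ) := {Sum.inl M, Sum.inr M} with hT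
    have hST : Disjoint S T := by
      rw [Finset.disjoint_left]
      intro x hxS hxT
      simp only [hS, hT, Finset.mem_union, Finset.mem_image, Finset.mem_insert,
        Finset.mem_singleton, Finset.mem_range] at hxS hxT
      rcases hxS with ⟨l, hl, rfl⟩ | ⟨l, hl, rfl⟩ <;> rcases hxT with h | h <;> simp_all
    have hmem1 : ∀ l, l ∈ Finset.range M → (Sum.inl l : ℕ ⊕ ℕ) ∈ S := fun l hl =>
      Finset.mem_union_left _ (Finset.mem_image_of_mem _ hl)
    have hmem2 : ∀ l, l ∈ Finset.range M → (Sum.inr l : ℕ ⊕ ℕ) ∈ S := fun l hl =>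
      Finset.mem_union_right _ (Finset.mem_image_of_mem _ hl)
    have hMT1 : (Sum.inl M : ℕ ⊕ ℕ) ∈ T := by simp [hT]
    have hMT2 : (Sum.inr M : ℕ ⊕ ℕ) ∈ T := by simp [hT]
    set g1 : ((i : S) → ℝ) → ℝ := fun v =>
      ∑ l ∈ (Finset.range M).attach,
        (v ⟨Sum.inl l.1, hmem1 l.1 l.2⟩ - v ⟨Sum.inr l.1, hmem2 l.1 l.2⟩ + lam) with hg1def
    set g2 : ((i : T) → ℝ) → ℝ := fun v => v ⟨Sum.inl M, hMT1⟩ - v ⟨Sum.inr M, hMT2⟩ + lam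
      with hg2def
    have hg1 : Measurable g1 := by
      rw [hg1def]
      apply Finset.measurable_sum
      intro l _
      fun_prop
    have hg2 : Measurable g2 := by
      rw [hg2def]
      fun_prop
    have base := (hindep.indepFun_finset S T hST hfmeas).comp hg1 hg2
    have e1 : (g1 ∘ fun a (i : S) => Sum.elim A H i a)
        = fun ω => ∑ l ∈ Finset.range M, (A l ω - H l ω + lam) := by
      funext ω
      simp only [Function.comp, hg1def]
      exact Finset.sum_attach _ fun l => A l ω - H l ω + lam
    have e2 : (g2 ∘ fun a (i : T) => Sum.elim A H i a)
        = fun ω => A M ω - H M ω + lam := rfl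
    rw [e1, e2] at base
    exact base
  -- mgf of partial sums
  have hsummeas : ∀ M : ℕ, Measurable fun ω => ∑ l ∈ Finset.range M, (A l ω - H l ω + lam) :=
    fun M => Finset.measurable_sum _ fun l _ => hXmeas l
  have hmgfS : ∀ M : ℕ,
      mgf (fun ω => ∑ l ∈ Finset.range M, (A l ω - H l ω + lam)) μ s ≤ Real.exp (c * M) := by
    intro M
    induction M with
    | zero =>
        simp [mgf, measure_univ]
    | succ M ih =>
        have heq : (fun ω => ∑ l ∈ Finset.range (M + 1), (A l ω - H l ω + lam))
            = (fun ω => ∑ l ∈ Finset.range M, (A l ω - H l ω + lam))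
              + fun ω => A M ω - H M ω + lam := by
          funext ω; simp [Finset.sum_range_succ]
        rw [heq, (hindep_sum M).mgf_add
          (((hsummeas M).const_mul s).exp.aestronglyMeasurable)
          (((hXmeas M).const_mul s).exp.aestronglyMeasurable)]
        calc mgf (fun ω => ∑ l ∈ Finset.range M, (A l ω - H l ω + lam)) μ s
              * mgf (fun ω => A M ω - H M ω + lam) μ s
            ≤ Real.exp (c * M) * Real.exp c :=
              mul_le_mul ih (hmgfX M) mgf_nonneg (Real.exp_nonneg _)
          _ = Real.exp (c * ((M + 1 : ℕ) : ℝ)) := by rw [← Real.exp_add]; congr 1; push_cast; ring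
  -- Chernoff bound for each M
  have hcher : ∀ M : ℕ,
      μ {ω | ∑ l ∈ Finset.range M, H l ω ≤ ∑ l ∈ Finset.range M, A l ω}
        ≤ ENNReal.ofReal (Real.exp (-(c * M))) := by
    intro M
    have hset : {ω | ∑ l ∈ Finset.range M, H l ω ≤ ∑ l ∈ Finset.range M, A l ω}
        = {ω | (M : ℝ) * lam ≤ ∑ l ∈ Finset.range M, (A l ω - H l ω + lam)} := by
      ext ω
      simp only [Set.mem_setOf_eq, Finset.sum_add_distrib, Finset.sum_sub_distrib,
        Finset.sum_const, Finset.card_range, nsmul_eq_mul]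
      constructor <;> intro h <;> linarith
    rw [hset]
    have hie : Integrable
        (fun ω => Real.exp (s * ∑ l ∈ Finset.range M, (A l ω - H l ω + lam))) μ := by
      apply hint _ (Real.exp (s * (M * K))) (((hsummeas M).const_mul s).exp)
      intro ω
      rw [Real.abs_exp]
      apply Real.exp_le_exp.2
      apply mul_le_mul_of_nonneg_left _ hs_pos.le
      calc (∑ l ∈ Finset.range M, (A l ω - H l ω + lam))
          ≤ ∑ l ∈ Finset.range M, K :=
            Finset.sum_le_sum fun l _ => le_trans (le_abs_self _) (hXabs l ω)
        _ = M * K := by rw [Finset.sum_const, Finset.card_range, nsmul_eq_mul]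
    have h1 := measure_ge_le_exp_mul_mgf (μ := μ)
      (X := fun ω => ∑ l ∈ Finset.range M, (A l ω - H l ω + lam))
      ((M : ℝ) * lam) hs_pos.le hie
    have h2 : Real.exp (-s * ((M : ℝ) * lam))
        * mgf (fun ω => ∑ l ∈ Finset.range M, (A l ω - H l ω + lam)) μ s
        ≤ Real.exp (-(c * M)) := by
      calc Real.exp (-s * ((M : ℝ) * lam))
          * mgf (fun ω => ∑ l ∈ Finset.range M, (A l ω - H l ω + lam)) μ s
          ≤ Real.exp (-s * ((M : ℝ) * lam)) * Real.exp (c * M) :=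
            mul_le_mul_of_nonneg_left (hmgfS M) (Real.exp_nonneg _)
        _ = Real.exp (-(c * M)) := by
            rw [← Real.exp_add]
            congr 1
            have : -s * ((M : ℝ) * lam) = -(s * lam) * M := by ring
            rw [this, hslam]; ring
    calc μ {ω | (M : ℝ) * lam ≤ ∑ l ∈ Finset.range M, (A l ω - H l ω + lam)}
        = ENNReal.ofReal (μ {ω | (M : ℝ) * lam
            ≤ ∑ l ∈ Finset.range M, (A l ω - H l ω + lam)}).toReal :=
          (ENNReal.ofReal_toReal (measure_ne_top _ _)).symm
      _ ≤ ENNReal.ofReal (Real.exp (-(c * M))) :=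
          ENNReal.ofReal_le_ofReal (h1.trans h2)
  -- union bound and geometric series
  have hr1 : Real.exp (-c) < 1 := by
    rw [← Real.exp_zero]
    exact Real.exp_lt_exp.2 (by linarith)
  have hsub : {ω | ∃ M : ℕ, k ≤ M ∧
      ∑ l ∈ Finset.range M, H l ω ≤ ∑ l ∈ Finset.range M, A l ω}
      ⊆ ⋃ j : ℕ, {ω | ∑ l ∈ Finset.range (k + j), H l ω
          ≤ ∑ l ∈ Finset.range (k + j), A l ω} := by
    rintro ω ⟨M, hkM, hle⟩
    exact Set.mem_iUnion.2 ⟨M - k, by rw [Nat.add_sub_cancel' hkM]; exact hle⟩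
  have hgeosum : Summable fun j : ℕ => Real.exp (-(c * k)) * Real.exp (-c) ^ j :=
    (summable_geometric_of_lt_one (Real.exp_nonneg _) hr1).mul_left _
  calc μ {ω | ∃ M : ℕ, k ≤ M ∧
        ∑ l ∈ Finset.range M, H l ω ≤ ∑ l ∈ Finset.range M, A l ω}
      ≤ μ (⋃ j : ℕ, {ω | ∑ l ∈ Finset.range (k + j), H l ω
          ≤ ∑ l ∈ Finset.range (k + j), A l ω}) := measure_mono hsub
    _ ≤ ∑' j : ℕ, μ {ω | ∑ l ∈ Finset.range (k + j), H l ω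
          ≤ ∑ l ∈ Finset.range (k + j), A l ω} := measure_iUnion_le _
    _ ≤ ∑' j : ℕ, ENNReal.ofReal (Real.exp (-(c * k)) * Real.exp (-c) ^ j) := by
        apply ENNReal.tsum_le_tsum
        intro j
        refine (hcher (k + j)).trans_eq ?_
        congr 1
        rw [← Real.exp_nat_mul, ← Real.exp_add]
        congr 1
        push_cast
        ring
    _ = ENNReal.ofReal (Real.exp (-(c * k)) / (1 - Real.exp (-c))) := by
        rw [← ENNReal.ofReal_tsum_of_nonneg (fun j => by positivity) hgeosum]
        congr 1
        rw [tsum_mul_left, tsum_geometric_of_lt_one (Real.exp_nonneg _) hr1, div_eq_mul_inv]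
end

section
/- Let α₁, α₂ > 0 be real numbers, and let X₁ and X₂ be independent [0,1]-valued random variables on a probability space (Ω, P) such that Xᵢ has law with density αᵢ x^{αᵢ−1} on [0,1] with respect to Lebesgue measure, for i = 1, 2. Then P(X₁ > X₂) = α₁ / (α₁ + α₂). -/
open MeasureTheory ProbabilityTheory

lemma bp_density_meas (α : ℝ) :
    Measurable fun x : ℝ => ENNReal.ofReal (α * x ^ (α - 1)) := by
  measurability

lemma bp_lintegral (α β : ℝ) (hα : 0 < α) (hβ : 0 ≤ β) :
    ∫⁻ x, ENNReal.ofReal (x ^ β) ∂ blockPowerMeasure α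
      = ENNReal.ofReal (α / (α + β)) := by
  have hab : (0:ℝ) < α + β := by linarith
  rw [blockPowerMeasure, lintegral_withDensity_eq_lintegral_mul _ (bp_density_meas α)
    (by measurability : Measurable fun x : ℝ => ENNReal.ofReal (x ^ β)),
    ← Measure.restrict_congr_set MeasureTheory.Ioc_ae_eq_Icc]
  have h1 : ∫⁻ x in Set.Ioc (0:ℝ) 1,
      ((fun x => ENNReal.ofReal (α * x ^ (α - 1))) * fun x => ENNReal.ofReal (x ^ β)) x
      = ∫⁻ x in Set.Ioc (0:ℝ) 1, ENNReal.ofReal (α * x ^ (α + β - 1)) := by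
    refine setLIntegral_congr_fun measurableSet_Ioc (fun x hx => ?_)
    have hx0 : 0 < x := hx.1
    simp only [Pi.mul_apply]
    rw [← ENNReal.ofReal_mul (by positivity), mul_assoc, ← Real.rpow_add hx0]
    ring_nf
  rw [h1]
  have hint : IntegrableOn (fun x : ℝ => α * x ^ (α + β - 1)) (Set.Ioc 0 1) volume := by
    have := (intervalIntegral.intervalIntegrable_rpow' (a := 0) (b := 1)
      (r := α + β - 1) (by linarith))
    rw [intervalIntegrable_iff_integrableOn_Ioc_of_le zero_le_one] at this
    exact this.const_mul α
  rw [← ofReal_integral_eq_lintegral_ofReal hint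
    (Filter.eventually_of_mem (self_mem_ae_restrict measurableSet_Ioc)
      (fun x hx => by have hx0 : (0:ℝ) < x := hx.1; positivity))]
  congr 1
  rw [← intervalIntegral.integral_of_le zero_le_one, intervalIntegral.integral_const_mul,
    integral_rpow (Or.inl (by linarith))]
  rw [sub_add_cancel, Real.one_rpow, Real.zero_rpow hab.ne']
  field_simp
  simp

lemma bp_Iio (α : ℝ) (hα : 0 < α) {x : ℝ} (hx : x ∈ Set.Icc (0:ℝ) 1) :
    blockPowerMeasure α (Set.Iio x) = ENNReal.ofReal (x ^ α) := by
  rw [blockPowerMeasure, withDensity_apply _ measurableSet_Iio,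
    Measure.restrict_restrict measurableSet_Iio]
  have hset : Set.Iio x ∩ Set.Icc (0:ℝ) 1 = Set.Ico 0 x := by
    ext y
    simp only [Set.mem_inter_iff, Set.mem_Iio, Set.mem_Icc, Set.mem_Ico]
    constructor
    · rintro ⟨h1, h2, h3⟩; exact ⟨h2, h1⟩
    · rintro ⟨h1, h2⟩; exact ⟨h2, h1, le_trans h2.le hx.2⟩
  rw [hset, ← Measure.restrict_congr_set MeasureTheory.Ioo_ae_eq_Ico]
  have hint : IntegrableOn (fun y : ℝ => α * y ^ (α - 1)) (Set.Ioo 0 x) volume := by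
    have := (intervalIntegral.intervalIntegrable_rpow' (a := 0) (b := x)
      (r := α - 1) (by linarith))
    rw [intervalIntegrable_iff_integrableOn_Ioo_of_le hx.1] at this
    exact this.const_mul α
  rw [← ofReal_integral_eq_lintegral_ofReal hint
    (Filter.eventually_of_mem (self_mem_ae_restrict measurableSet_Ioo)
      (fun y hy => by have : (0:ℝ) < y := hy.1; positivity))]
  congr 1
  rw [← MeasureTheory.integral_Ioc_eq_integral_Ioo,
    ← intervalIntegral.integral_of_le hx.1, intervalIntegral.integral_const_mul,
    integral_rpow (Or.inl (by linarith))]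
  rw [sub_add_cancel, Real.zero_rpow hα.ne']
  field_simp
  simp

lemma bp_prob (α : ℝ) (hα : 0 < α) : IsProbabilityMeasure (blockPowerMeasure α) := by
  constructor
  have := bp_lintegral α 0 hα le_rfl
  rw [add_zero, div_self hα.ne', ENNReal.ofReal_one] at this
  simpa [Real.rpow_zero] using this

/-- **Proof-of-Stake selection probability.** If `X₁` and `X₂` are independent
`[0,1]`-valued random variables whose laws are the block-power distributions with
stake powers `α₁` and `α₂` respectively, then the probability that `X₁ > X₂`
(i.e. that the first node wins) is `α₁ / (α₁ + α₂)`. -/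
theorem blockpower_win_probability
    {Ω : Type*} [MeasurableSpace Ω] (μ : Measure Ω) [IsProbabilityMeasure μ]
    (α₁ α₂ : ℝ) (hα₁ : 0 < α₁) (hα₂ : 0 < α₂)
    (X₁ X₂ : Ω → ℝ) (hmeas₁ : Measurable X₁) (hmeas₂ : Measurable X₂)
    (hrange₁ : ∀ ω, X₁ ω ∈ Set.Icc (0 : ℝ) 1)
    (hrange₂ : ∀ ω, X₂ ω ∈ Set.Icc (0 : ℝ) 1)
    (hindep : IndepFun X₁ X₂ μ)
    (hlaw₁ : Measure.map X₁ μ = blockPowerMeasure α₁)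
    (hlaw₂ : Measure.map X₂ μ = blockPowerMeasure α₂) :
    μ {ω | X₂ ω < X₁ ω} = ENNReal.ofReal (α₁ / (α₁ + α₂)) := by
  have hprod := (indepFun_iff_map_prod_eq_prod_map_map hmeas₁.aemeasurable
    hmeas₂.aemeasurable).mp hindep
  haveI := bp_prob α₂ hα₂
  have hs : MeasurableSet {p : ℝ × ℝ | p.2 < p.1} :=
    measurableSet_lt measurable_snd measurable_fst
  have h1 : μ {ω | X₂ ω < X₁ ω}
      = ((blockPowerMeasure α₁).prod (blockPowerMeasure α₂)) {p : ℝ × ℝ | p.2 < p.1} := by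
    rw [← hlaw₁, ← hlaw₂, ← hprod,
      Measure.map_apply (hmeas₁.prodMk hmeas₂) hs]
    rfl
  rw [h1, Measure.prod_apply hs]
  have hpre : ∀ x : ℝ, Prod.mk x ⁻¹' {p : ℝ × ℝ | p.2 < p.1} = Set.Iio x := fun x => rfl
  simp only [hpre]
  have hae : ∀ᵐ x ∂blockPowerMeasure α₁, x ∈ Set.Icc (0:ℝ) 1 := by
    rw [blockPowerMeasure]
    exact (withDensity_absolutelyContinuous _ _).ae_le (ae_restrict_mem measurableSet_Icc)
  rw [lintegral_congr_ae (hae.mono fun x hx => bp_Iio α₂ hα₂ hx)]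
  exact bp_lintegral α₁ α₂ hα₁ hα₂.le
end
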